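/- Let X ⊆ ℝ^d be a nonempty open connected set. Let p, q : ℝ^d → ℝ be probability densities (nonnegative, Lebesgue-integrable with total integral 1) that are strictly positive and continuously differentiable on X and vanish outside X, and suppose the function x ↦ p(x)·‖∇log p(x) − ∇log q(x)‖² is integrable on X. Then the Fisher divergence FD(p||q) = (1/2)∫_X p(x)·‖∇log p(x) − ∇log q(x)‖² dx equals 0 if and only if p(x) = q(x) for all x ∈ X. -/

import Mathlib

open MeasureTheory

/-- A function whose derivative vanishes on an open preconnected set is constant there. -/
lemma aux_const_of_fderiv_zero {E : Type*} [NormedAddCommGroup E] [NormedSpace ℝ E]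
    {f : E → ℝ} {X : Set E} (hXopen : IsOpen X) (hXconn : IsPreconnected X)
    (hf : ∀ x ∈ X, HasFDerivAt f (0 : E →L[ℝ] ℝ) x) {a b : E} (ha : a ∈ X) (hb : b ∈ X) :
    f a = f b := by
  -- local constancy on balls
  have hloc : ∀ x ∈ X, ∃ ε > 0, Metric.ball x ε ⊆ X ∧
      ∀ y ∈ Metric.ball x ε, f y = f x := by
    intro x hx
    obtain ⟨ε, εpos, hball⟩ := Metric.isOpen_iff.1 hXopen x hx
    refine ⟨ε, εpos, hball, fun y hy => ?_⟩
    refine (convex_ball x ε).is_const_of_fderivWithin_eq_zero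
      (fun z hz => ((hf z (hball hz)).differentiableAt).differentiableWithinAt)
      (fun z hz => ?_) hy (Metric.mem_ball_self εpos)
    rw [fderivWithin_of_isOpen Metric.isOpen_ball hz]
    exact (hf z (hball hz)).fderiv
  by_contra hne
  set U : Set E := {y | y ∈ X ∧ f y = f a} with hU
  set V : Set E := {y | y ∈ X ∧ f y ≠ f a} with hV
  have hUopen : IsOpen U := by
    refine Metric.isOpen_iff.2 fun y hy => ?_
    obtain ⟨ε, εpos, hball, hconst⟩ := hloc y hy.1
    exact ⟨ε, εpos, fun z hz => ⟨hball hz, (hconst z hz).trans hy.2⟩⟩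
  have hVopen : IsOpen V := by
    refine Metric.isOpen_iff.2 fun y hy => ?_
    obtain ⟨ε, εpos, hball, hconst⟩ := hloc y hy.1
    exact ⟨ε, εpos, fun z hz => ⟨hball hz, (hconst z hz) ▸ hy.2⟩⟩
  have hcover : X ⊆ U ∪ V := fun y hy => by
    by_cases h : f y = f a
    · exact Or.inl ⟨hy, h⟩
    · exact Or.inr ⟨hy, h⟩
  obtain ⟨z, hzX, hzU, hzV⟩ := hXconn U V hUopen hVopen hcover
    ⟨a, ha, ha, rfl⟩ ⟨b, hb, hb, fun h => hne h.symm⟩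
  exact hzV.2 hzU.2

/-- Theorem 1 (FD on a connected set): for probability densities `p, q` on `ℝ^d` that are
strictly positive and continuously differentiable on a common nonempty open connected support
`X` (and vanish outside `X`), with integrable score difference, the Fisher divergence
`FD(p‖q) = (1/2) ∫_X p(x) ‖∇log p(x) − ∇log q(x)‖²` vanishes iff `p = q` on `X`. -/
theorem fisher_divergence_zero_iff_eq_on_connected
    {d : ℕ} (X : Set (EuclideanSpace ℝ (Fin d)))
    (hXne : X.Nonempty) (hXopen : IsOpen X) (hXconn : IsConnected X)
    (p q : EuclideanSpace ℝ (Fin d) → ℝ)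
    (hp_meas : Measurable p) (hq_meas : Measurable q)
    (hp_nonneg : ∀ x, 0 ≤ p x) (hq_nonneg : ∀ x, 0 ≤ q x)
    (hp_int : Integrable p) (hq_int : Integrable q)
    (hp_one : ∫ x, p x = 1) (hq_one : ∫ x, q x = 1)
    (hp_pos : ∀ x ∈ X, 0 < p x) (hq_pos : ∀ x ∈ X, 0 < q x)
    (hp_diff : ContDiffOn ℝ 1 p X) (hq_diff : ContDiffOn ℝ 1 q X)
    (hp_zero : ∀ x ∉ X, p x = 0) (hq_zero : ∀ x ∉ X, q x = 0)
    (h_int : IntegrableOn (fun x =>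
      p x * ‖gradient (fun y => Real.log (p y)) x
            - gradient (fun y => Real.log (q y)) x‖ ^ 2) X) :
    (1 / 2 : ℝ) * ∫ x in X,
        p x * ‖gradient (fun y => Real.log (p y)) x
              - gradient (fun y => Real.log (q y)) x‖ ^ 2 = 0
      ↔ ∀ x ∈ X, p x = q x := by
  set lp : EuclideanSpace ℝ (Fin d) → ℝ := fun y => Real.log (p y) with hlp_def
  set lq : EuclideanSpace ℝ (Fin d) → ℝ := fun y => Real.log (q y) with hlq_def
  have hlp_diff : ∀ x ∈ X, ContDiffAt ℝ 1 lp x := fun x hx =>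
    (Real.contDiffAt_log.2 (hp_pos x hx).ne').comp x
      (hp_diff.contDiffAt (hXopen.mem_nhds hx))
  have hlq_diff : ∀ x ∈ X, ContDiffAt ℝ 1 lq x := fun x hx =>
    (Real.contDiffAt_log.2 (hq_pos x hx).ne').comp x
      (hq_diff.contDiffAt (hXopen.mem_nhds hx))
  have hlp_diffOn : ContDiffOn ℝ 1 lp X := fun x hx => (hlp_diff x hx).contDiffWithinAt
  have hlq_diffOn : ContDiffOn ℝ 1 lq X := fun x hx => (hlq_diff x hx).contDiffWithinAt
  constructor
  · intro hFD
    have hInt0 : ∫ x in X, p x * ‖gradient lp x - gradient lq x‖ ^ 2 = 0 := by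
      have := hFD
      field_simp at this
      simpa using this
    -- integrand is nonneg, so it is a.e. zero on X
    have hnonneg : 0 ≤ᵐ[volume.restrict X]
        fun x => p x * ‖gradient lp x - gradient lq x‖ ^ 2 :=
      Filter.Eventually.of_forall fun x =>
        mul_nonneg (hp_nonneg x) (by positivity)
    have hae : (fun x => p x * ‖gradient lp x - gradient lq x‖ ^ 2)
        =ᵐ[volume.restrict X] 0 :=
      (integral_eq_zero_iff_of_nonneg_ae hnonneg h_int).1 hInt0
    -- continuity of the integrand on X
    have hcont_glp : ContinuousOn (fun x => gradient lp x) X := by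
      have h1 : ContinuousOn (fderiv ℝ lp) X :=
        hlp_diffOn.continuousOn_fderiv_of_isOpen hXopen le_rfl
      exact ((InnerProductSpace.toDual ℝ
        (EuclideanSpace ℝ (Fin d))).symm.continuous.comp_continuousOn h1)
    have hcont_glq : ContinuousOn (fun x => gradient lq x) X := by
      have h1 : ContinuousOn (fderiv ℝ lq) X :=
        hlq_diffOn.continuousOn_fderiv_of_isOpen hXopen le_rfl
      exact ((InnerProductSpace.toDual ℝ
        (EuclideanSpace ℝ (Fin d))).symm.continuous.comp_continuousOn h1)
    have hcont : ContinuousOn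
        (fun x => p x * ‖gradient lp x - gradient lq x‖ ^ 2) X :=
      (hp_diff.continuousOn).mul (((hcont_glp.sub hcont_glq).norm).pow 2)
    have heq0 : ∀ x ∈ X, p x * ‖gradient lp x - gradient lq x‖ ^ 2 = 0 :=
      Measure.eqOn_open_of_ae_eq hae hXopen hcont continuousOn_const
    -- gradients agree on X
    have hgrad : ∀ x ∈ X, gradient lp x - gradient lq x = 0 := by
      intro x hx
      have h1 := heq0 x hx
      have h2 : ‖gradient lp x - gradient lq x‖ ^ 2 = 0 := by
        rcases mul_eq_zero.1 h1 with h | h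
        · exact absurd h (hp_pos x hx).ne'
        · exact h
      have := pow_eq_zero_iff (n := 2) (by norm_num) |>.1 h2
      exact norm_eq_zero.1 this
    -- the difference of logs has zero derivative on X
    have hderiv0 : ∀ x ∈ X, HasFDerivAt (fun x => lp x - lq x)
        (0 : EuclideanSpace ℝ (Fin d) →L[ℝ] ℝ) x := by
      intro x hx
      have hdp : DifferentiableAt ℝ lp x := (hlp_diff x hx).differentiableAt one_ne_zero
      have hdq : DifferentiableAt ℝ lq x := (hlq_diff x hx).differentiableAt one_ne_zero
      have h := hdp.hasFDerivAt.sub hdq.hasFDerivAt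
      have hfd : fderiv ℝ lp x - fderiv ℝ lq x = 0 := by
        have h1 : fderiv ℝ lp x = (InnerProductSpace.toDual ℝ _) (gradient lp x) := by
          rw [gradient]; simp
        have h2 : fderiv ℝ lq x = (InnerProductSpace.toDual ℝ _) (gradient lq x) := by
          rw [gradient]; simp
        rw [h1, h2, ← map_sub, hgrad x hx, map_zero]
      rwa [hfd] at h
    -- hence log p − log q is constant on X
    obtain ⟨x₀, hx₀⟩ := hXne
    have hconst : ∀ x ∈ X, lp x - lq x = lp x₀ - lq x₀ := fun x hx =>
      aux_const_of_fderiv_zero hXopen hXconn.isPreconnected hderiv0 hx hx₀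
    set c : ℝ := lp x₀ - lq x₀ with hc
    have hpq : ∀ x ∈ X, p x = Real.exp c * q x := by
      intro x hx
      have h1 : lp x = c + lq x := by have := hconst x hx; linarith
      have h2 : p x = Real.exp (lp x) := (Real.exp_log (hp_pos x hx)).symm
      rw [h2, h1, Real.exp_add, Real.exp_log (hq_pos x hx)]
    -- use the normalizations to show exp c = 1
    have hpint : ∫ x in X, p x = 1 := by
      rw [setIntegral_eq_integral_of_forall_compl_eq_zero hp_zero, hp_one]
    have hqint : ∫ x in X, q x = 1 := by
      rw [setIntegral_eq_integral_of_forall_compl_eq_zero hq_zero, hq_one]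
    have hec : Real.exp c = 1 := by
      have h1 : ∫ x in X, p x = ∫ x in X, Real.exp c * q x :=
        setIntegral_congr_fun hXopen.measurableSet fun x hx => hpq x hx
      rw [integral_const_mul, hqint, mul_one] at h1
      rw [hpint] at h1
      exact h1.symm
    intro x hx
    rw [hpq x hx, hec, one_mul]
  · intro hpq
    have hzero : ∀ x ∈ X, p x * ‖gradient lp x - gradient lq x‖ ^ 2 = 0 := by
      intro x hx
      have hev : lp =ᶠ[nhds x] lq := by
        filter_upwards [hXopen.mem_nhds hx] with y hy
        simp only [hlp_def, hlq_def, hpq y hy]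
      rw [hev.gradient_eq, sub_self, norm_zero]
      ring
    have : ∫ x in X, p x * ‖gradient lp x - gradient lq x‖ ^ 2 = 0 := by
      rw [setIntegral_congr_fun hXopen.measurableSet hzero, integral_zero]
    rw [this, mul_zero]
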